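/- Every ⋆-involutive idempotent residuated chain is quasi-involutive: if an idempotent residuated chain satisfies x^{⋆⋆} = x for all x (where x^⋆ = x^ℓ ∧ x^r), then it also satisfies x^{ℓr} ∧ x^{rℓ} = x for all x. -/
import Mathlib


/-- `x^⋆ = x^ℓ ∧ x^r`. -/
def lstar {A : Type*} [Lattice A] [One A] (ld rd : A → A → A) (x : A) : A :=
  rd 1 x ⊓ ld x 1

/-- Every ⋆-involutive idempotent residuated chain is quasi-involutive:
`x^{⋆⋆} = x` for all `x` implies `x^{ℓr} ∧ x^{rℓ} = x` for all `x`. -/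
theorem stmt16 {A : Type*} [LinearOrder A] [Monoid A]
    (ld rd : A → A → A)
    (resl : ∀ x y z : A, x * y ≤ z ↔ y ≤ ld x z)
    (resr : ∀ x y z : A, x * y ≤ z ↔ x ≤ rd z y)
    (idem : ∀ x : A, x * x = x)
    (starinv : ∀ x : A, lstar ld rd (lstar ld rd x) = x) :
    ∀ x : A, ld (rd 1 x) 1 ⊓ rd 1 (ld x 1) = x := by
  intro x
  have hmulr : ∀ a b c : A, a ≤ b → a * c ≤ b * c := fun a b c h =>
    (resr a c (b * c)).mpr (le_trans h ((resr b c (b * c)).mp le_rfl))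
  have hmull : ∀ a b c : A, b ≤ c → a * b ≤ a * c := fun a b c h =>
    (resl a b (a * c)).mpr (le_trans h ((resl a c (a * c)).mp le_rfl))
  have hl : ∀ a : A, rd 1 a * a ≤ 1 := fun a => (resr _ _ _).mpr le_rfl
  have hr : ∀ a : A, a * ld a 1 ≤ 1 := fun a => (resl _ _ _).mpr le_rfl
  have hxlr : ∀ a : A, a ≤ ld (rd 1 a) 1 := fun a => (resl _ _ _).mp (hl a)
  have hxrl : ∀ a : A, a ≤ rd 1 (ld a 1) := fun a => (resr _ _ _).mp (hr a)
  have antl : ∀ a b : A, a ≤ b → rd 1 b ≤ rd 1 a := fun a b h =>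
    (resr _ _ _).mp (le_trans (hmull _ _ _ h) (hl b))
  have antr : ∀ a b : A, a ≤ b → ld b 1 ≤ ld a 1 := fun a b h =>
    (resl _ _ _).mp (le_trans (hmulr _ _ _ h) (hr b))
  have hst := starinv x
  unfold lstar at hst
  have hle : x ≤ ld (rd 1 x) 1 ⊓ rd 1 (ld x 1) := le_inf (hxlr x) (hxrl x)
  rcases le_total (rd 1 x) (ld x 1) with h | h
  · rw [inf_eq_left.mpr h] at hst
    rcases le_total (rd 1 (rd 1 x)) (ld (rd 1 x) 1) with h2 | h2
    · rw [inf_eq_left.mpr h2] at hst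
      have h3 : rd 1 (ld x 1) ≤ rd 1 (rd 1 x) := antl _ _ h
      exact le_antisymm (inf_le_right.trans (h3.trans hst.le)) hle
    · rw [inf_eq_right.mpr h2] at hst
      exact le_antisymm (inf_le_left.trans hst.le) hle
  · rw [inf_eq_right.mpr h] at hst
    rcases le_total (rd 1 (ld x 1)) (ld (ld x 1) 1) with h2 | h2
    · rw [inf_eq_left.mpr h2] at hst
      exact le_antisymm (inf_le_right.trans hst.le) hle
    · rw [inf_eq_right.mpr h2] at hst
      have h3 : ld (rd 1 x) 1 ≤ ld (ld x 1) 1 := antr _ _ h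
      exact le_antisymm (inf_le_left.trans (h3.trans hst.le)) hle
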